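/- Fix a real constant c₀. On the open set U = { (x,p) ∈ ℝ² : x ≠ 0 }, define h₁(x,p) = 4/x, h₂(x,p) = x p, and h₃(x,p) = (1/4) p² x³ + 4 c₀ x. Then, with respect to the canonical Poisson bracket {f,g} = ∂f/∂x · ∂g/∂p − ∂f/∂p · ∂g/∂x, the identities {h₁,h₃} = −2 h₂, {h₁,h₂} = −h₁, and {h₂,h₃} = −h₃ hold at every point of U. -/

import Mathlib

noncomputable def poissonBracket2 (f g : ℝ × ℝ → ℝ) (z : ℝ × ℝ) : ℝ :=
  fderiv ℝ f z (1, 0) * fderiv ℝ g z (0, 1) -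
    fderiv ℝ f z (0, 1) * fderiv ℝ g z (1, 0)

section aux
open ContinuousLinearMap

lemma hd1 (z : ℝ × ℝ) (hz : z.1 ≠ 0) :
    HasFDerivAt (fun z : ℝ × ℝ => 4 / z.1)
      (-((4 * (z.1 ^ 2)⁻¹) • ContinuousLinearMap.fst ℝ ℝ ℝ)) z := by
  have h := ((hasDerivAt_inv hz).comp_hasFDerivAt z (hasFDerivAt_fst (𝕜 := ℝ) (p := z))).const_mul 4
  simpa [div_eq_mul_inv, smul_smul, mul_neg, neg_smul] using h

lemma hd2 (z : ℝ × ℝ) :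
    HasFDerivAt (fun z : ℝ × ℝ => z.1 * z.2)
      (z.1 • ContinuousLinearMap.snd ℝ ℝ ℝ + z.2 • ContinuousLinearMap.fst ℝ ℝ ℝ) z :=
  (hasFDerivAt_fst (𝕜 := ℝ) (p := z)).mul (hasFDerivAt_snd (𝕜 := ℝ) (p := z))

lemma hd3 (c₀ : ℝ) (z : ℝ × ℝ) :
    HasFDerivAt (fun z : ℝ × ℝ => (1 / 4) * z.2 ^ 2 * z.1 ^ 3 + 4 * c₀ * z.1)
      (((1/4 * z.2 ^ 2) • ((3 * z.1 ^ 2) • ContinuousLinearMap.fst ℝ ℝ ℝ) +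
        z.1 ^ 3 • ((1/4 : ℝ) • ((2 * z.2) • ContinuousLinearMap.snd ℝ ℝ ℝ))) +
        (4 * c₀) • ContinuousLinearMap.fst ℝ ℝ ℝ) z := by
  have hp : HasFDerivAt (fun z : ℝ × ℝ => (1/4 : ℝ) * z.2 ^ 2)
      ((1/4 : ℝ) • ((2 * z.2) • ContinuousLinearMap.snd ℝ ℝ ℝ)) z := by
    have := ((hasDerivAt_pow 2 z.2).comp_hasFDerivAt z (hasFDerivAt_snd (𝕜 := ℝ) (p := z))).const_mul (1/4 : ℝ)
    simpa [pow_one] using this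
  have hx : HasFDerivAt (fun z : ℝ × ℝ => z.1 ^ 3)
      ((3 * z.1 ^ 2) • ContinuousLinearMap.fst ℝ ℝ ℝ) z := by
    have := (hasDerivAt_pow 3 z.1).comp_hasFDerivAt z (hasFDerivAt_fst (𝕜 := ℝ) (p := z))
    simpa [Function.comp_def] using this
  have hl : HasFDerivAt (fun z : ℝ × ℝ => 4 * c₀ * z.1)
      ((4 * c₀) • ContinuousLinearMap.fst ℝ ℝ ℝ) z := by
    have := (hasFDerivAt_fst (𝕜 := ℝ) (p := z)).const_mul (4 * c₀)
    simpa using this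
  exact (hp.mul hx).add hl

end aux

theorem kummer_schwarz_hamiltonians_sl2 (c₀ : ℝ) (h₁ h₂ h₃ : ℝ × ℝ → ℝ)
    (hh₁ : ∀ z : ℝ × ℝ, h₁ z = 4 / z.1)
    (hh₂ : ∀ z : ℝ × ℝ, h₂ z = z.1 * z.2)
    (hh₃ : ∀ z : ℝ × ℝ, h₃ z = (1 / 4) * z.2 ^ 2 * z.1 ^ 3 + 4 * c₀ * z.1)
    (z : ℝ × ℝ) (hz : z.1 ≠ 0) :
    poissonBracket2 h₁ h₃ z = -2 * h₂ z ∧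
    poissonBracket2 h₁ h₂ z = -h₁ z ∧
    poissonBracket2 h₂ h₃ z = -h₃ z := by
  have e₁ : h₁ = fun z : ℝ × ℝ => 4 / z.1 := funext hh₁
  have e₂ : h₂ = fun z : ℝ × ℝ => z.1 * z.2 := funext hh₂
  have e₃ : h₃ = fun z : ℝ × ℝ => (1 / 4) * z.2 ^ 2 * z.1 ^ 3 + 4 * c₀ * z.1 :=
    funext hh₃
  have f₁ := (hd1 z hz).fderiv
  have f₂ := (hd2 z).fderiv
  have f₃ := (hd3 c₀ z).fderiv
  refine ⟨?_, ?_, ?_⟩ <;>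
  · simp only [poissonBracket2, e₁, e₂, e₃, f₁, f₂, f₃,
      ContinuousLinearMap.add_apply, ContinuousLinearMap.smul_apply, ContinuousLinearMap.neg_apply,
      ContinuousLinearMap.coe_fst', ContinuousLinearMap.coe_snd', smul_eq_mul]
    field_simp
    ring
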